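/- Let M be a submonoid of the additive monoid ℚ₊ of nonnegative rational numbers that is not isomorphic as an additive monoid to ℕ₀ = {0, 1, 2, …}, and let F be a field. Then for a ∈ M, the monomial X^a is irreducible in the monoid domain F[X;M] if and only if a is an essential generator of M; moreover, whenever X^a is irreducible it is not prime. -/

import Mathlib

/-- `a` is an essential generator of `M ⊆ ℚ₊`: the submonoid generated by
`M ∖ {a}` is not all of `M`. -/
def IsEssentialGenerator (M : AddSubmonoid ℚ) (a : ℚ) : Prop :=
  a ∈ M ∧ AddSubmonoid.closure ((M : Set ℚ) \ {a}) ≠ M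

section Aux

variable {M : AddSubmonoid ℚ} {F : Type*} [Field F]

private lemma sne {b : M} {s : F} (hs : s ≠ 0) :
    (AddMonoidAlgebra.single b s : AddMonoidAlgebra F M) ≠ 0 :=
  fun h0 => hs (AddMonoidAlgebra.single_eq_zero.mp h0)

private lemma coe_nsmul' (n : ℕ) (x : M) : ((n • x : M) : ℚ) = (n : ℚ) * (x : ℚ) := by
  induction n with
  | zero => simp
  | succ n ih => rw [succ_nsmul, AddSubmonoid.coe_add, ih]; push_cast; ring

/-- If a product in `F[X;M]` is a nonzero monomial, both factors are monomials. -/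
private lemma mono_factor {p q : AddMonoidAlgebra F M} {a : M} {r : F} (hr : r ≠ 0)
    (h : p * q = AddMonoidAlgebra.single a r) :
    ∃ (b c : M) (s t : F), s ≠ 0 ∧ t ≠ 0 ∧ p = AddMonoidAlgebra.single b s ∧
      q = AddMonoidAlgebra.single c t ∧ b + c = a ∧ s * t = r := by
  have hp : p ≠ 0 := by rintro rfl; rw [zero_mul] at h; exact sne hr h.symm
  have hq : q ≠ 0 := by rintro rfl; rw [mul_zero] at h; exact sne hr h.symm
  obtain ⟨bM, hbM, hbMle⟩ := p.coeff.support.exists_max_image (fun x : M => (x : ℚ))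
    (Finsupp.support_nonempty_iff.mpr (mt AddMonoidAlgebra.coeff_eq_zero.mp hp))
  obtain ⟨bm, hbm, hbmle⟩ := p.coeff.support.exists_min_image (fun x : M => (x : ℚ))
    (Finsupp.support_nonempty_iff.mpr (mt AddMonoidAlgebra.coeff_eq_zero.mp hp))
  obtain ⟨cM, hcM, hcMle⟩ := q.coeff.support.exists_max_image (fun x : M => (x : ℚ))
    (Finsupp.support_nonempty_iff.mpr (mt AddMonoidAlgebra.coeff_eq_zero.mp hq))
  obtain ⟨cm, hcm, hcmle⟩ := q.coeff.support.exists_min_image (fun x : M => (x : ℚ))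
    (Finsupp.support_nonempty_iff.mpr (mt AddMonoidAlgebra.coeff_eq_zero.mp hq))
  have keyM : (p * q).coeff (bM + cM) = p.coeff bM * q.coeff cM := by
    refine AddMonoidAlgebra.coeff_mul_add_of_uniqueAdd ?_
    intro x y hx hy hxy
    have h1 := hbMle x hx
    have h2 := hcMle y hy
    have h3 : (x : ℚ) + (y : ℚ) = (bM : ℚ) + (cM : ℚ) := by
      have := congrArg (Subtype.val) hxy; push_cast at this; exact this
    exact ⟨Subtype.ext (by linarith), Subtype.ext (by linarith)⟩
  have keym : (p * q).coeff (bm + cm) = p.coeff bm * q.coeff cm := by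
    refine AddMonoidAlgebra.coeff_mul_add_of_uniqueAdd ?_
    intro x y hx hy hxy
    have h1 := hbmle x hx
    have h2 := hcmle y hy
    have h3 : (x : ℚ) + (y : ℚ) = (bm : ℚ) + (cm : ℚ) := by
      have := congrArg (Subtype.val) hxy; push_cast at this; exact this
    exact ⟨Subtype.ext (by linarith), Subtype.ext (by linarith)⟩
  have hbMne : p.coeff bM ≠ 0 := Finsupp.mem_support_iff.mp hbM
  have hbmne : p.coeff bm ≠ 0 := Finsupp.mem_support_iff.mp hbm
  have hcMne : q.coeff cM ≠ 0 := Finsupp.mem_support_iff.mp hcM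
  have hcmne : q.coeff cm ≠ 0 := Finsupp.mem_support_iff.mp hcm
  have haM : bM + cM = a := by
    have h4 : (AddMonoidAlgebra.single a r : AddMonoidAlgebra F M).coeff (bM + cM) ≠ 0 := by
      rw [← h, keyM]; exact mul_ne_zero hbMne hcMne
    rw [AddMonoidAlgebra.coeff_single, Finsupp.single_apply] at h4
    split_ifs at h4 with he
    · exact he.symm
    · exact absurd rfl h4
  have ham : bm + cm = a := by
    have h4 : (AddMonoidAlgebra.single a r : AddMonoidAlgebra F M).coeff (bm + cm) ≠ 0 := by
      rw [← h, keym]; exact mul_ne_zero hbmne hcmne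
    rw [AddMonoidAlgebra.coeff_single, Finsupp.single_apply] at h4
    split_ifs at h4 with he
    · exact he.symm
    · exact absurd rfl h4
  have hsum : (bM : ℚ) + (cM : ℚ) = (bm : ℚ) + (cm : ℚ) := by
    have h5 := haM.trans ham.symm
    have := congrArg (Subtype.val) h5; push_cast at this; exact this
  have hb1 := hbmle bM hbM
  have hc1 := hcmle cM hcM
  have hbeq : (bm : ℚ) = (bM : ℚ) := by linarith
  have hceq : (cm : ℚ) = (cM : ℚ) := by linarith
  have hpsupp : p.coeff.support ⊆ {bM} := by
    intro x hx
    have h5 := hbMle x hx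
    have h6 := hbmle x hx
    simp only [Finset.mem_singleton]
    exact Subtype.ext (le_antisymm h5 (hbeq ▸ h6))
  have hqsupp : q.coeff.support ⊆ {cM} := by
    intro x hx
    have h5 := hcMle x hx
    have h6 := hcmle x hx
    simp only [Finset.mem_singleton]
    exact Subtype.ext (le_antisymm h5 (hceq ▸ h6))
  have hps : p = AddMonoidAlgebra.single bM (p.coeff bM) :=
    AddMonoidAlgebra.coeff_injective (Finsupp.eq_single_iff.mpr ⟨hpsupp, rfl⟩)
  have hqs : q = AddMonoidAlgebra.single cM (q.coeff cM) :=
    AddMonoidAlgebra.coeff_injective (Finsupp.eq_single_iff.mpr ⟨hqsupp, rfl⟩)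
  refine ⟨bM, cM, p.coeff bM, q.coeff cM, hbMne, hcMne, hps, hqs, haM, ?_⟩
  have h7 := keyM
  rw [h, haM, AddMonoidAlgebra.coeff_single, Finsupp.single_eq_same] at h7
  exact h7.symm

private lemma isUnit_single_iff (hM : ∀ x ∈ M, (0 : ℚ) ≤ x) {b : M} {s : F} :
    IsUnit (AddMonoidAlgebra.single b s : AddMonoidAlgebra F M) ↔ b = 0 ∧ s ≠ 0 := by
  constructor
  · intro hu
    obtain ⟨u, hu⟩ := hu
    have h : (↑u * ↑u⁻¹ : AddMonoidAlgebra F M) = AddMonoidAlgebra.single 0 1 := by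
      rw [Units.mul_inv, AddMonoidAlgebra.one_def]
    rw [hu] at h
    obtain ⟨b', c, s', t, hs', ht, hps, hqs, hbc, hst⟩ :=
      mono_factor (one_ne_zero : (1 : F) ≠ 0) h
    rcases AddMonoidAlgebra.single_inj.mp hps with ⟨hb, hsx⟩ | ⟨hs0, hs0'⟩
    · subst hb
      have hcoe : (b : ℚ) + (c : ℚ) = 0 := by
        have := congrArg (Subtype.val) hbc; push_cast at this; simpa using this
      have hb0 : (b : ℚ) = 0 := le_antisymm (by have := hM c c.2; linarith) (hM b b.2)
      exact ⟨Subtype.ext hb0, hsx ▸ hs'⟩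
    · exact absurd hs0' hs'
  · rintro ⟨rfl, hs⟩
    refine IsUnit.of_mul_eq_one
      (AddMonoidAlgebra.single 0 s⁻¹ : AddMonoidAlgebra F M) ?_
    rw [AddMonoidAlgebra.single_mul_single, add_zero, mul_inv_cancel₀ hs,
      AddMonoidAlgebra.one_def]

private lemma closure_le_M {a : ℚ} : AddSubmonoid.closure ((M : Set ℚ) \ {a}) ≤ M :=
  AddSubmonoid.closure_le.mpr (fun _ hx => hx.1)

private lemma essential_iff {a : M} :
    IsEssentialGenerator M (a : ℚ) ↔
      (a : ℚ) ∉ AddSubmonoid.closure ((M : Set ℚ) \ {(a : ℚ)}) := by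
  constructor
  · rintro ⟨-, hne⟩ hmem
    refine hne (le_antisymm closure_le_M ?_)
    intro x hx
    by_cases hxa : x = (a : ℚ)
    · rwa [hxa]
    · exact AddSubmonoid.subset_closure ⟨hx, hxa⟩
  · intro hmem
    refine ⟨a.2, fun he => hmem ?_⟩
    rw [he]; exact a.2

private lemma exists_decomp {a : M} (ha : (a : ℚ) ≠ 0)
    (h : (a : ℚ) ∈ AddSubmonoid.closure ((M : Set ℚ) \ {(a : ℚ)})) :
    ∃ b c : M, (b : ℚ) ≠ 0 ∧ (c : ℚ) ≠ 0 ∧ b + c = a := by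
  have key : ∀ x ∈ AddSubmonoid.closure ((M : Set ℚ) \ {(a : ℚ)}),
      x ∈ M ∧ (x = (a : ℚ) → ∃ u v : ℚ, u ∈ M ∧ v ∈ M ∧ u ≠ 0 ∧ v ≠ 0 ∧ u + v = (a : ℚ)) := by
    intro x hx
    induction hx using AddSubmonoid.closure_induction with
    | mem y hy => exact ⟨hy.1, fun he => absurd he hy.2⟩
    | zero => exact ⟨zero_mem M, fun he => absurd he.symm ha⟩
    | add y z hy hz ihy ihz =>
      refine ⟨add_mem ihy.1 ihz.1, fun he => ?_⟩
      by_cases hy0 : y = 0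
      · exact ihz.2 (by rw [hy0, zero_add] at he; exact he)
      by_cases hz0 : z = 0
      · exact ihy.2 (by rw [hz0, add_zero] at he; exact he)
      · exact ⟨y, z, ihy.1, ihz.1, hy0, hz0, he⟩
  obtain ⟨-, h2⟩ := key _ h
  obtain ⟨u, v, hu, hv, hu0, hv0, huv⟩ := h2 rfl
  exact ⟨⟨u, hu⟩, ⟨v, hv⟩, hu0, hv0, Subtype.ext huv⟩

private lemma prime_to_equiv (hM : ∀ x ∈ M, (0 : ℚ) ≤ x) {F : Type*} [Field F] {a : M}
    (hpr : Prime (AddMonoidAlgebra.single a 1 : AddMonoidAlgebra F M)) : Nonempty (M ≃+ ℕ) := by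
  have ha : a ≠ 0 := by
    rintro rfl
    exact hpr.not_unit ((isUnit_single_iff hM).mpr ⟨rfl, one_ne_zero⟩)
  have haQ : (0 : ℚ) < (a : ℚ) :=
    lt_of_le_of_ne (hM a a.2) (fun he => ha (Subtype.ext he.symm))
  -- every nonzero element of M is divisible by a inside M
  have key : ∀ x : M, x ≠ 0 → ∃ y : M, a + y = x := by
    intro x hx
    have hxQ : (0 : ℚ) < (x : ℚ) :=
      lt_of_le_of_ne (hM x x.2) (fun he => hx (Subtype.ext he.symm))
    set r : ℚ := (x : ℚ) / (a : ℚ) with hr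
    have hrpos : 0 < r := div_pos hxQ haQ
    have hnum : 0 < r.num := Rat.num_pos.mpr hrpos
    set p : ℕ := r.num.toNat with hpdef
    set q : ℕ := r.den with hqdef
    have hppos : 0 < p := by omega
    have hden : (r.den : ℚ) ≠ 0 := by positivity
    have hpZ : (p : ℤ) = r.num := by rw [hpdef]; exact Int.toNat_of_nonneg hnum.le
    have hp' : (p : ℚ) = (r.num : ℚ) := by exact_mod_cast congrArg (fun z : ℤ => (z : ℚ)) hpZ
    have hqx : (q : ℚ) * (x : ℚ) = (p : ℚ) * (a : ℚ) := by
      have h1 : r * (a : ℚ) = (x : ℚ) := div_mul_cancel₀ _ (ne_of_gt haQ)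
      have h2 : (r.num : ℚ) / (r.den : ℚ) = r := Rat.num_div_den r
      have h4 : (q : ℚ) * r = (r.num : ℚ) := by
        have h5 : (r.num : ℚ) / (r.den : ℚ) * (r.den : ℚ) = (r.num : ℚ) :=
          div_mul_cancel₀ _ hden
        rw [h2] at h5
        rw [hqdef, mul_comm]
        exact h5
      rw [← h1, ← mul_assoc, h4, ← hp']
    have hdvd : (AddMonoidAlgebra.single a 1 : AddMonoidAlgebra F M) ∣
        (AddMonoidAlgebra.single x 1 : AddMonoidAlgebra F M) ^ q := by
      refine ⟨(AddMonoidAlgebra.single ((p - 1) • a) 1 : AddMonoidAlgebra F M), ?_⟩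
      rw [AddMonoidAlgebra.single_pow, one_pow, AddMonoidAlgebra.single_mul_single, mul_one]
      congr 1
      apply Subtype.ext
      rw [coe_nsmul', AddSubmonoid.coe_add, coe_nsmul']
      have : ((p - 1 : ℕ) : ℚ) = (p : ℚ) - 1 := by
        rw [Nat.cast_sub hppos]; norm_num
      rw [this]
      linarith [hqx]
    have hdvd2 := hpr.dvd_of_dvd_pow hdvd
    obtain ⟨f, hf⟩ := hdvd2
    obtain ⟨b, c, s, t, hs, ht, hbs, hct, hbc, hst⟩ :=
      mono_factor (one_ne_zero : (1 : F) ≠ 0) hf.symm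
    rcases AddMonoidAlgebra.single_inj.mp hbs with ⟨hb, -⟩ | ⟨h10, -⟩
    · exact ⟨c, by rw [hb]; exact hbc⟩
    · exact absurd h10 one_ne_zero
  -- every element of M is a multiple of a
  have aux : ∀ k : ℕ, ∀ x : M, (x : ℚ) ≤ (k : ℚ) * (a : ℚ) → ∃ n : ℕ, n • a = x := by
    intro k
    induction k with
    | zero =>
      intro x hx
      refine ⟨0, Subtype.ext ?_⟩
      rw [zero_nsmul]
      have hx0 : (x : ℚ) = 0 := le_antisymm (by simpa using hx) (hM x x.2)
      simpa using hx0.symm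
    | succ k ih =>
      intro x hx
      by_cases hx0 : x = 0
      · exact ⟨0, by rw [zero_nsmul, hx0]⟩
      · obtain ⟨y, hy⟩ := key x hx0
        have hycoe : (a : ℚ) + (y : ℚ) = (x : ℚ) := by
          have := congrArg Subtype.val hy; push_cast at this; exact this
        have hyle : (y : ℚ) ≤ (k : ℚ) * (a : ℚ) := by push_cast at hx; linarith
        obtain ⟨n, hn⟩ := ih y hyle
        refine ⟨n + 1, ?_⟩
        rw [succ_nsmul', hn, hy]
  have surj : Function.Surjective (multiplesHom M a) := by
    intro x
    have hle : (x : ℚ) ≤ ((⌈(x : ℚ) / (a : ℚ)⌉₊ : ℕ) : ℚ) * (a : ℚ) :=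
      (div_le_iff₀ haQ).mp (Nat.le_ceil _)
    obtain ⟨n, hn⟩ := aux ⌈(x : ℚ) / (a : ℚ)⌉₊ x hle
    exact ⟨n, hn⟩
  have inj : Function.Injective (multiplesHom M a) := by
    intro m n hmn
    have h2 : (m : ℚ) * (a : ℚ) = (n : ℚ) * (a : ℚ) := by
      have := congrArg Subtype.val hmn
      rwa [multiplesHom_apply, multiplesHom_apply, coe_nsmul', coe_nsmul'] at this
    exact_mod_cast mul_right_cancel₀ (ne_of_gt haQ) h2
  exact ⟨(AddEquiv.ofBijective (multiplesHom M a) ⟨inj, surj⟩).symm⟩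

end Aux

theorem monomial_irreducible_iff_essential (M : AddSubmonoid ℚ)
    (hM : ∀ x ∈ M, (0 : ℚ) ≤ x) (hnotN : ¬ Nonempty (M ≃+ ℕ))
    (F : Type*) [Field F] (a : M) :
    (Irreducible (AddMonoidAlgebra.of' F M a) ↔ IsEssentialGenerator M (a : ℚ)) ∧
      (Irreducible (AddMonoidAlgebra.of' F M a) →
        ¬ Prime (AddMonoidAlgebra.of' F M a)) := by
  rw [AddMonoidAlgebra.of'_apply]
  constructor
  · constructor
    · intro hirr
      refine ⟨a.2, fun hclos => ?_⟩
      have hmem : (a : ℚ) ∈ AddSubmonoid.closure ((M : Set ℚ) \ {(a : ℚ)}) := by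
        rw [hclos]; exact a.2
      have ha0 : (a : ℚ) ≠ 0 := by
        intro h0
        exact hirr.not_isUnit ((isUnit_single_iff hM).mpr ⟨Subtype.ext h0, one_ne_zero⟩)
      obtain ⟨b, c, hb0, hc0, hbc⟩ := exists_decomp ha0 hmem
      have heq : (AddMonoidAlgebra.single a 1 : AddMonoidAlgebra F M) =
          (AddMonoidAlgebra.single b 1 : AddMonoidAlgebra F M) *
            (AddMonoidAlgebra.single c 1 : AddMonoidAlgebra F M) := by
        rw [AddMonoidAlgebra.single_mul_single, one_mul, hbc]
      rcases hirr.isUnit_or_isUnit heq with h | h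
      · refine hb0 ?_
        have hb := ((isUnit_single_iff hM).mp h).1
        rw [hb]; simp
      · refine hc0 ?_
        have hc := ((isUnit_single_iff hM).mp h).1
        rw [hc]; simp
    · intro hess
      have hmem := essential_iff.mp hess
      constructor
      · intro hu
        have ha0 : a = 0 := ((isUnit_single_iff hM).mp hu).1
        refine hmem ?_
        have : (a : ℚ) = 0 := by rw [ha0]; simp
        rw [this]
        exact zero_mem _
      · intro f g hfg
        obtain ⟨b, c, s, t, hs, ht, hfs, hgt, hbc, hst⟩ :=
          mono_factor (one_ne_zero : (1 : F) ≠ 0) hfg.symm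
        by_cases hb0 : (b : ℚ) = 0
        · left; rw [hfs]; exact (isUnit_single_iff hM).mpr ⟨Subtype.ext (by simpa using hb0), hs⟩
        by_cases hc0 : (c : ℚ) = 0
        · right; rw [hgt]; exact (isUnit_single_iff hM).mpr ⟨Subtype.ext (by simpa using hc0), ht⟩
        · exfalso
          have hcoe : (b : ℚ) + (c : ℚ) = (a : ℚ) := by
            have := congrArg Subtype.val hbc; push_cast at this; exact this
          have hbne : (b : ℚ) ≠ (a : ℚ) := fun he => hc0 (by linarith)
          have hcne : (c : ℚ) ≠ (a : ℚ) := fun he => hb0 (by linarith)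
          have hin : (b : ℚ) + (c : ℚ) ∈ AddSubmonoid.closure ((M : Set ℚ) \ {(a : ℚ)}) :=
            add_mem (AddSubmonoid.subset_closure ⟨b.2, hbne⟩)
              (AddSubmonoid.subset_closure ⟨c.2, hcne⟩)
          rw [hcoe] at hin
          exact hmem hin
  · intro _ hpr
    exact hnotN (prime_to_equiv hM hpr)
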